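/- Let A, B ∈ ℝ^{n×n} be symmetric with B positive semi-definite and ker(B) ⊆ ker(A), and let m = n - dim(ker(B)). Then the pair (A, B) has m real generalized eigenvalues, and these are exactly the eigenvalues of B^{-1/2} A B^{-1/2} (Moore–Penrose pseudo-inverse square root), excluding eigenvalues whose eigenvectors lie in ker(B). -/

import Mathlib

open Matrix BigOperators

/-- Moore–Penrose pseudo-inverse of the positive semi-definite square root of a
Hermitian (real symmetric) matrix `B`, i.e. `B^{-1/2}` with the convention
`0⁻¹ = 0` on the eigenvalues. -/
noncomputable def pinvSqrt {n : ℕ} (B : Matrix (Fin n) (Fin n) ℝ)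
    (hB : B.IsHermitian) : Matrix (Fin n) (Fin n) ℝ :=
  (hB.eigenvectorUnitary : Matrix (Fin n) (Fin n) ℝ) *
    Matrix.diagonal (fun i => (Real.sqrt (hB.eigenvalues i))⁻¹) *
    star (hB.eigenvectorUnitary : Matrix (Fin n) (Fin n) ℝ)

lemma dot_mulVec_symm {n : ℕ} (M : Matrix (Fin n) (Fin n) ℝ) (hM : M.IsSymm)
    (u v : Fin n → ℝ) : (M *ᵥ u) ⬝ᵥ v = u ⬝ᵥ (M *ᵥ v) := by
  rw [dotProduct_comm, dotProduct_mulVec, ← mulVec_transpose, hM, dotProduct_comm]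

lemma mulVec_col' {n : ℕ} (X Y : Matrix (Fin n) (Fin n) ℝ) (j : Fin n) :
    X *ᵥ (fun k => Y k j) = fun i => (X * Y) i j := by
  funext i; simp [Matrix.mul_apply, mulVec, dotProduct]

lemma conj_mul_conj {n : ℕ} (N : Matrix (Fin n) (Fin n) ℝ) (hN : star N * N = 1)
    (f g : Fin n → ℝ) :
    (N * diagonal f * star N) * (N * diagonal g * star N)
      = N * diagonal (fun i => f i * g i) * star N := by
  calc (N * diagonal f * star N) * (N * diagonal g * star N)
      = N * (diagonal f * ((star N * N) * (diagonal g * star N))) := by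
        simp only [Matrix.mul_assoc]
    _ = N * (diagonal f * diagonal g) * star N := by
        rw [hN, one_mul]
        simp only [Matrix.mul_assoc]
    _ = _ := by rw [diagonal_mul_diagonal]

lemma conj_isSymm {n : ℕ} (N : Matrix (Fin n) (Fin n) ℝ) (f : Fin n → ℝ) :
    (N * diagonal f * star N).IsSymm := by
  have hs : star N = Nᵀ := conjTranspose_eq_transpose_of_trivial N
  rw [Matrix.IsSymm, hs, transpose_mul, transpose_mul, transpose_transpose,
    diagonal_transpose, Matrix.mul_assoc]

lemma conj_coord {n : ℕ} (N : Matrix (Fin n) (Fin n) ℝ) (hN1 : star N * N = 1)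
    (f : Fin n → ℝ) (x : Fin n → ℝ) (i : Fin n) :
    (star N *ᵥ ((N * diagonal f * star N) *ᵥ x)) i = f i * (star N *ᵥ x) i := by
  rw [mulVec_mulVec, ← Matrix.mul_assoc, ← Matrix.mul_assoc, hN1, one_mul,
    ← mulVec_mulVec, mulVec_diagonal]

lemma conj_vanish {n : ℕ} (N : Matrix (Fin n) (Fin n) ℝ) (hN1 : star N * N = 1)
    (hN2 : N * star N = 1) (f g : Fin n → ℝ) (hfg : ∀ i, g i = 0 → f i = 0)
    (x : Fin n → ℝ) (hPx : (N * diagonal f * star N) *ᵥ x = x)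
    (hSx : (N * diagonal g * star N) *ᵥ x = 0) : x = 0 := by
  set y := star N *ᵥ x with hy
  have hyf : ∀ i, f i * y i = y i := by
    intro i
    have := congrArg (fun z => (star N *ᵥ z) i) hPx
    simpa [conj_coord N hN1, ← hy] using this
  have hyg : ∀ i, g i * y i = 0 := by
    intro i
    have := congrArg (fun z => (star N *ᵥ z) i) hSx
    simpa [conj_coord N hN1, ← hy] using this
  have hy0 : y = 0 := by
    funext i
    by_cases h : g i = 0
    · have := hyf i
      rw [hfg i h, zero_mul] at this
      exact this.symm
    · have := hyg i
      rcases mul_eq_zero.mp this with h' | h'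
      · exact absurd h' h
      · exact h'
  have : x = (N * star N) *ᵥ x := by rw [hN2, one_mulVec]
  rw [this, ← mulVec_mulVec, ← hy, hy0, mulVec_zero]

lemma eig_unique {n : ℕ} (C : Matrix (Fin n) (Fin n) ℝ) (hC : C.IsHermitian)
    (c : ℝ) (hc : c ∉ Set.range hC.eigenvalues) (v : Fin n → ℝ)
    (hv : C *ᵥ v = c • v) : v = 0 := by
  set W : Matrix (Fin n) (Fin n) ℝ := (hC.eigenvectorUnitary : Matrix (Fin n) (Fin n) ℝ) with hW
  have hN1 : star W * W = 1 := hC.eigenvectorUnitary.2.1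
  have hN2 : W * star W = 1 := hC.eigenvectorUnitary.2.2
  have hspec : C = W * diagonal hC.eigenvalues * star W := by
    have := hC.spectral_theorem
    simpa using this
  set y := star W *ᵥ v with hy
  have hyc : ∀ i, hC.eigenvalues i * y i = c * y i := by
    intro i
    have := congrArg (fun z => (star W *ᵥ z) i) hv
    rw [hspec] at this
    rw [conj_coord W hN1] at this
    simpa [← hy, mulVec_smul, Pi.smul_apply, smul_eq_mul] using this
  have hy0 : y = 0 := by
    funext i
    have hne : hC.eigenvalues i ≠ c := fun h => hc ⟨i, h⟩
    have h1 := sub_eq_zero.mpr (hyc i)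
    rw [← sub_mul] at h1
    rcases mul_eq_zero.mp h1 with h' | h'
    · exact absurd (sub_eq_zero.mp h') hne
    · exact h'
  have : v = (W * star W) *ᵥ v := by rw [hN2, one_mulVec]
  rw [this, ← mulVec_mulVec, ← hy, hy0, mulVec_zero]


/-- If `A, B` are symmetric, `B` is positive semi-definite,
`ker B ⊆ ker A` and `m = n - dim ker B`, then `(A, B)` has `m` real generalized
eigenvalues (there is a `B`-orthonormal family of `m` generalized eigenpairs),
and the generalized eigenvalues of `(A, B)` are exactly the eigenvalues of
`B^{-1/2} A B^{-1/2}` whose eigenvectors do not lie in `ker B`. -/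
theorem generalized_eigenvalues_of_singular_B
    (n m : ℕ) (A B : Matrix (Fin n) (Fin n) ℝ)
    (hA : A.IsSymm) (hB : B.PosSemidef)
    (hker : ∀ v : Fin n → ℝ, B.mulVec v = 0 → A.mulVec v = 0)
    (hm : m + Module.finrank ℝ (LinearMap.ker (Matrix.toLin' B)) = n) :
    (∃ (lam : Fin m → ℝ) (V : Fin m → (Fin n → ℝ)),
        (∀ i, A.mulVec (V i) = lam i • B.mulVec (V i)) ∧
        (∀ i j, V i ⬝ᵥ B.mulVec (V j) = if i = j then 1 else 0)) ∧
    (∀ μ : ℝ,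
        (∃ v : Fin n → ℝ, A.mulVec v = μ • B.mulVec v ∧ v ⬝ᵥ B.mulVec v = 1) ↔
        (∃ u : Fin n → ℝ, u ≠ 0 ∧
          (pinvSqrt B hB.1 * A * pinvSqrt B hB.1).mulVec u = μ • u ∧
          B.mulVec u ≠ 0)) := by
  classical
  set d : Fin n → ℝ := hB.1.eigenvalues with hd_def
  set N : Matrix (Fin n) (Fin n) ℝ := (hB.1.eigenvectorUnitary : Matrix (Fin n) (Fin n) ℝ)
    with hN_def
  have hN1 : star N * N = 1 := hB.1.eigenvectorUnitary.2.1
  have hN2 : N * star N = 1 := hB.1.eigenvectorUnitary.2.2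
  have hd : ∀ i, 0 ≤ d i := fun i => hB.eigenvalues_nonneg i
  set sf : Fin n → ℝ := fun i => (Real.sqrt (d i))⁻¹ with hsf_def
  set rf : Fin n → ℝ := fun i => Real.sqrt (d i) with hrf_def
  set pf : Fin n → ℝ := fun i => if d i = 0 then 0 else 1 with hpf_def
  set S : Matrix (Fin n) (Fin n) ℝ := pinvSqrt B hB.1 with hS_def
  have hS : S = N * diagonal sf * star N := rfl
  set R : Matrix (Fin n) (Fin n) ℝ := N * diagonal rf * star N with hR_def
  set P : Matrix (Fin n) (Fin n) ℝ := N * diagonal pf * star N with hP_def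
  have hBspec : B = N * diagonal d * star N := by
    have h := hB.1.spectral_theorem
    simpa [RCLike.ofReal_real_eq_id] using h
  -- scalar identities
  have hrr : (fun i => rf i * rf i) = d := funext fun i => Real.mul_self_sqrt (hd i)
  have hsqnz : ∀ i, d i ≠ 0 → Real.sqrt (d i) ≠ 0 := fun i h =>
    Real.sqrt_ne_zero'.mpr (lt_of_le_of_ne (hd i) (Ne.symm h))
  have hsr : (fun i => sf i * rf i) = pf := by
    funext i
    by_cases h : d i = 0
    · simp [hsf_def, hrf_def, hpf_def, h]
    · simp [hsf_def, hrf_def, hpf_def, h, inv_mul_cancel₀ (hsqnz i h)]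
  have hrs : (fun i => rf i * sf i) = pf := by
    funext i
    by_cases h : d i = 0
    · simp [hsf_def, hrf_def, hpf_def, h]
    · simp [hsf_def, hrf_def, hpf_def, h, mul_inv_cancel₀ (hsqnz i h)]
  have hds : (fun i => d i * sf i) = rf := by
    funext i
    by_cases h : d i = 0
    · simp [hsf_def, hrf_def, h]
    · have h2 := hsqnz i h
      simp only [hsf_def, hrf_def]
      rw [← div_eq_mul_inv, div_eq_iff h2]
      exact (Real.mul_self_sqrt (hd i)).symm
  have hsd : (fun i => sf i * d i) = rf := by
    funext i
    have := congrFun hds i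
    simpa [mul_comm] using this
  have hps : (fun i => pf i * sf i) = sf := by
    funext i
    by_cases h : d i = 0
    · simp [hsf_def, hpf_def, h]
    · simp [hpf_def, h]
  have hsp : (fun i => sf i * pf i) = sf := by
    funext i
    by_cases h : d i = 0
    · simp [hsf_def, hpf_def, h]
    · simp [hpf_def, h]
  have hpr : (fun i => pf i * rf i) = rf := by
    funext i
    by_cases h : d i = 0
    · simp [hrf_def, hpf_def, h]
    · simp [hpf_def, h]
  have hdp : (fun i => d i * pf i) = d := by
    funext i
    by_cases h : d i = 0
    · simp [hpf_def, h]
    · simp [hpf_def, h]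
  have hpp : (fun i => pf i * pf i) = pf := by
    funext i
    by_cases h : d i = 0
    · simp [hpf_def, h]
    · simp [hpf_def, h]
  have hfg : ∀ i, sf i = 0 → pf i = 0 := by
    intro i h
    by_cases hdi : d i = 0
    · simp [hpf_def, hdi]
    · exfalso
      rw [hsf_def] at h
      simp only [inv_eq_zero] at h
      exact hsqnz i hdi h
  -- matrix identities
  have hRR : R * R = B := by rw [hR_def, conj_mul_conj N hN1, hrr, ← hBspec]
  have hBS : B * S = R := by rw [hBspec, hS, conj_mul_conj N hN1, hds, ← hR_def]
  have hSB : S * B = R := by rw [hBspec, hS, conj_mul_conj N hN1, hsd, ← hR_def]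
  have hSR : S * R = P := by rw [hR_def, hS, conj_mul_conj N hN1, hsr, ← hP_def]
  have hRS : R * S = P := by rw [hR_def, hS, conj_mul_conj N hN1, hrs, ← hP_def]
  have hPS : P * S = S := by rw [hP_def, hS, conj_mul_conj N hN1, hps, ← hS]
  have hSP : S * P = S := by rw [hP_def, hS, conj_mul_conj N hN1, hsp, ← hS]
  have hPR : P * R = R := by rw [hP_def, hR_def, conj_mul_conj N hN1, hpr, ← hR_def]
  have hBP : B * P = B := by rw [hBspec, hP_def, conj_mul_conj N hN1, hdp, ← hBspec]
  have hPP : P * P = P := by rw [hP_def, conj_mul_conj N hN1, hpp, ← hP_def]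
  have hSsymm : S.IsSymm := by rw [hS]; exact conj_isSymm N sf
  have hRsymm : R.IsSymm := by rw [hR_def]; exact conj_isSymm N rf
  have hPsymm : P.IsSymm := by rw [hP_def]; exact conj_isSymm N pf
  -- A * P = A, P * A = A
  have hAP : A * P = A := by
    have hB1P : B * (1 - P) = 0 := by rw [Matrix.mul_sub, Matrix.mul_one, hBP, sub_self]
    have h0 : A * (1 - P) = 0 := by
      ext i j
      have h1 : B *ᵥ (fun k => (1 - P) k j) = 0 := by
        rw [mulVec_col', hB1P]
        rfl
      calc (A * (1 - P)) i j = (A *ᵥ (fun k => (1 - P) k j)) i :=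
            (congrFun (mulVec_col' A (1 - P) j) i).symm
        _ = 0 := congrFun (hker _ h1) i
        _ = (0 : Matrix (Fin n) (Fin n) ℝ) i j := rfl
    have := sub_eq_zero.mp (by rw [Matrix.mul_sub, Matrix.mul_one] at h0; exact h0)
    exact this.symm
  have hPA : P * A = A := by
    have h := congrArg Matrix.transpose hAP
    rw [transpose_mul, hPsymm, hA] at h
    exact h
  have hPC : P * (S * A * S) = S * A * S := by
    calc P * (S * A * S) = ((P * S) * A) * S := by simp only [Matrix.mul_assoc]
      _ = S * A * S := by rw [hPS]
  have hCP : (S * A * S) * P = S * A * S := by rw [Matrix.mul_assoc, hSP]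
  -- kernel fact
  have hBker : ∀ x : Fin n → ℝ, B *ᵥ x = 0 → P *ᵥ x = 0 := by
    intro x hx
    have hRx : R *ᵥ x = 0 := by
      rw [← hSB, ← mulVec_mulVec, hx, mulVec_zero]
    rw [← hSR, ← mulVec_mulVec, hRx, mulVec_zero]
  -- key lemma
  have key : ∀ (w : Fin n → ℝ) (μ : ℝ), (S * A * S) *ᵥ w = μ • w → P *ᵥ w = w →
      A *ᵥ (S *ᵥ w) = μ • (B *ᵥ (S *ᵥ w)) := by
    intro w μ hCw hPw
    have hPAS : P * (A * S) = A * S := by rw [← Matrix.mul_assoc, hPA]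
    have h1 : P *ᵥ ((A * S) *ᵥ w - μ • (R *ᵥ w)) = (A * S) *ᵥ w - μ • (R *ᵥ w) := by
      rw [mulVec_sub, mulVec_smul, mulVec_mulVec, hPAS, mulVec_mulVec, hPR]
    have h2 : S *ᵥ ((A * S) *ᵥ w - μ • (R *ᵥ w)) = 0 := by
      have e1 : S *ᵥ ((A * S) *ᵥ w) = μ • w := by
        rw [mulVec_mulVec, ← Matrix.mul_assoc, hCw]
      have e2 : S *ᵥ (μ • (R *ᵥ w)) = μ • w := by
        rw [mulVec_smul, mulVec_mulVec, hSR, hPw]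
      rw [mulVec_sub, e1, e2, sub_self]
    have hx : (A * S) *ᵥ w - μ • (R *ᵥ w) = 0 := by
      apply conj_vanish N hN1 hN2 pf sf hfg _ _ _
      · rw [← hP_def]; exact h1
      · rw [← hS]; exact h2
    have hx' : (A * S) *ᵥ w = μ • (R *ᵥ w) := sub_eq_zero.mp hx
    rw [mulVec_mulVec, hx', mulVec_mulVec, hBS]
  constructor
  · -- Part 1
    have hCsymm : (S * A * S).IsSymm := by
      rw [Matrix.IsSymm, transpose_mul, transpose_mul, hSsymm, hA, ← Matrix.mul_assoc]
    have hCH : (S * A * S).IsHermitian := by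
      rw [Matrix.IsHermitian, conjTranspose_eq_transpose_of_trivial]
      exact hCsymm
    obtain ⟨c, hc⟩ := (Set.finite_range hCH.eigenvalues).infinite_compl.nonempty
    have hc' : c ∉ Set.range hCH.eigenvalues := hc
    set M0 : Matrix (Fin n) (Fin n) ℝ := S * A * S + c • (1 - P) with hM0_def
    have hM0symm : M0.IsSymm := by
      rw [Matrix.IsSymm, hM0_def, transpose_add, transpose_smul, transpose_sub,
        transpose_one, hPsymm, hCsymm]
    have hMH : M0.IsHermitian := by
      rw [Matrix.IsHermitian, conjTranspose_eq_transpose_of_trivial]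
      exact hM0symm
    set W : Matrix (Fin n) (Fin n) ℝ := (hMH.eigenvectorUnitary : Matrix (Fin n) (Fin n) ℝ)
      with hW_def
    set ν : Fin n → ℝ := hMH.eigenvalues with hν_def
    have hW1 : star W * W = 1 := hMH.eigenvectorUnitary.2.1
    have hMspec : M0 = W * diagonal ν * star W := by
      have h := hMH.spectral_theorem
      simpa [RCLike.ofReal_real_eq_id] using h
    set wv : Fin n → Fin n → ℝ := fun j k => W k j with hwv_def
    have hMw : ∀ j, M0 *ᵥ wv j = ν j • wv j := by
      intro j
      have hMW : M0 * W = W * diagonal ν := by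
        rw [hMspec, Matrix.mul_assoc (W * diagonal ν), hW1, Matrix.mul_one]
      funext i
      calc (M0 *ᵥ wv j) i = (M0 * W) i j := congrFun (mulVec_col' M0 W j) i
        _ = (W * diagonal ν) i j := by rw [hMW]
        _ = W i j * ν j := Matrix.mul_diagonal ν W i j
        _ = (ν j • wv j) i := by simp [hwv_def, mul_comm]
    have hortho : ∀ j k, wv j ⬝ᵥ wv k = if j = k then 1 else 0 := by
      intro j k
      have h := congrFun (congrFun hW1 j) k
      simpa [Matrix.mul_apply, Matrix.one_apply, Matrix.star_apply, dotProduct,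
        hwv_def] using h
    have hPM : P * M0 = S * A * S := by
      rw [hM0_def, Matrix.mul_add, Matrix.mul_smul, Matrix.mul_sub, Matrix.mul_one,
        hPP, sub_self, smul_zero, add_zero, hPC]
    have hexp : ∀ j, M0 *ᵥ wv j = (S * A * S) *ᵥ wv j + c • (wv j - P *ᵥ wv j) := by
      intro j
      rw [hM0_def, add_mulVec, smul_mulVec, sub_mulVec, one_mulVec]
    have hi0 : ∀ j, (S * A * S) *ᵥ wv j = ν j • (P *ᵥ wv j) := by
      intro j
      have h := congrArg (fun z => P *ᵥ z) (hMw j)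
      simpa [mulVec_mulVec, hPM, mulVec_smul] using h
    have hfacts : ∀ j, ν j ≠ c → P *ᵥ wv j = wv j ∧ (S * A * S) *ᵥ wv j = ν j • wv j := by
      intro j hj
      have hMwj := hMw j
      rw [hexp j, hi0 j] at hMwj
      have hPwj : P *ᵥ wv j = wv j := by
        funext i
        have h := congrFun hMwj i
        simp only [Pi.add_apply, Pi.smul_apply, Pi.sub_apply, smul_eq_mul] at h
        have hne : ν j - c ≠ 0 := sub_ne_zero.mpr hj
        have h2 : (ν j - c) * ((P *ᵥ wv j) i) = (ν j - c) * (wv j i) := by ring_nf; linarith [h]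
        exact mul_left_cancel₀ hne h2
      exact ⟨hPwj, by rw [hi0 j, hPwj]⟩
    have hkerw : ∀ j, ν j = c → B *ᵥ wv j = 0 := by
      intro j hj
      have hi : (S * A * S) *ᵥ wv j = c • (P *ᵥ wv j) := by rw [hi0 j, hj]
      have hCPw : (S * A * S) *ᵥ (P *ᵥ wv j) = c • (P *ᵥ wv j) := by
        rw [mulVec_mulVec, hCP, hi]
      have hP0 : P *ᵥ wv j = 0 := eig_unique (S * A * S) hCH c hc' _ hCPw
      calc B *ᵥ wv j = (B * P) *ᵥ wv j := by rw [hBP]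
        _ = B *ᵥ (P *ᵥ wv j) := by rw [← mulVec_mulVec]
        _ = 0 := by rw [hP0, mulVec_zero]
    set Z : Finset (Fin n) := Finset.univ.filter (fun j => ν j = c) with hZ_def
    set T : Finset (Fin n) := Finset.univ.filter (fun j => ¬ ν j = c) with hT_def
    have hZT : Z.card + T.card = n := by
      rw [hZ_def, hT_def, Finset.card_filter_add_card_filter_not]
      simp
    have hZle : Z.card ≤ Module.finrank ℝ (LinearMap.ker (Matrix.toLin' B)) := by
      have hli : LinearIndependent ℝ (fun j : {x // x ∈ Z} => wv (j : Fin n)) := by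
        rw [Fintype.linearIndependent_iff]
        intro g hg j
        have h := congrArg (fun z => z ⬝ᵥ wv (j : Fin n)) hg
        simp only [zero_dotProduct] at h
        have hsum : (∑ k : {x // x ∈ Z}, g k • wv (k : Fin n)) ⬝ᵥ wv (j : Fin n)
            = ∑ k : {x // x ∈ Z}, g k * (wv (k : Fin n) ⬝ᵥ wv (j : Fin n)) := by
          simp only [dotProduct, Finset.sum_apply, Pi.smul_apply, smul_eq_mul,
            Finset.sum_mul, Finset.mul_sum]
          rw [Finset.sum_comm]
          exact Finset.sum_congr rfl fun k _ => Finset.sum_congr rfl fun i _ => by ring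
        rw [hsum] at h
        have hterm : ∀ k : {x // x ∈ Z}, g k * (wv (k : Fin n) ⬝ᵥ wv (j : Fin n))
            = if k = j then g k else 0 := by
          intro k
          rw [hortho]
          by_cases hkj : k = j
          · simp [hkj]
          · have : (k : Fin n) ≠ (j : Fin n) := fun hh => hkj (Subtype.ext hh)
            simp [this, hkj]
        rw [Finset.sum_congr rfl (fun k _ => hterm k), Finset.sum_ite_eq'] at h
        simpa using h
      have hsub : Submodule.span ℝ (Set.range (fun j : {x // x ∈ Z} => wv (j : Fin n)))
          ≤ LinearMap.ker (Matrix.toLin' B) := by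
        rw [Submodule.span_le]
        rintro x ⟨j, rfl⟩
        simp only [SetLike.mem_coe, LinearMap.mem_ker, Matrix.toLin'_apply]
        have hj : ν (j : Fin n) = c := by
          have h2 := j.2
          simp only [hZ_def, Finset.mem_filter] at h2
          exact h2.2
        exact hkerw _ hj
      calc Z.card = Fintype.card {x // x ∈ Z} := (Fintype.card_coe Z).symm
        _ = Module.finrank ℝ (Submodule.span ℝ
              (Set.range (fun j : {x // x ∈ Z} => wv (j : Fin n)))) :=
            (finrank_span_eq_card hli).symm
        _ ≤ _ := Submodule.finrank_mono hsub
    have hTm : m ≤ T.card := by omega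
    set ι := T.orderEmbOfCardLe hTm with hι_def
    have hιne : ∀ i, ν (ι i) ≠ c := by
      intro i
      have h2 := T.orderEmbOfCardLe_mem hTm i
      simp only [hT_def, Finset.mem_filter] at h2
      exact h2.2
    refine ⟨fun i => ν (ι i), fun i => S *ᵥ wv (ι i), ?_, ?_⟩
    · intro i
      obtain ⟨hP1, hC1⟩ := hfacts (ι i) (hιne i)
      exact key _ _ hC1 hP1
    · intro i j
      obtain ⟨hPj, _⟩ := hfacts (ι j) (hιne j)
      calc (S *ᵥ wv (ι i)) ⬝ᵥ (B *ᵥ (S *ᵥ wv (ι j)))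
          = (S *ᵥ wv (ι i)) ⬝ᵥ (R *ᵥ wv (ι j)) := by rw [mulVec_mulVec, hBS]
        _ = wv (ι i) ⬝ᵥ (S *ᵥ (R *ᵥ wv (ι j))) := dot_mulVec_symm S hSsymm _ _
        _ = wv (ι i) ⬝ᵥ (P *ᵥ wv (ι j)) := by rw [mulVec_mulVec, hSR]
        _ = wv (ι i) ⬝ᵥ wv (ι j) := by rw [hPj]
        _ = if ι i = ι j then 1 else 0 := hortho _ _
        _ = if i = j then 1 else 0 := by simp [ι.injective.eq_iff]
  · -- Part 2
    intro μ
    constructor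
    · rintro ⟨v, hv1, hv2⟩
      have hdot : v ⬝ᵥ B *ᵥ v = (R *ᵥ v) ⬝ᵥ (R *ᵥ v) := by
        rw [← hRR, ← mulVec_mulVec, ← dot_mulVec_symm R hRsymm]
      have hu1 : (R *ᵥ v) ⬝ᵥ (R *ᵥ v) = 1 := by rw [← hdot, hv2]
      refine ⟨R *ᵥ v, ?_, ?_, ?_⟩
      · intro h0
        rw [h0] at hu1
        simp at hu1
      · rw [mulVec_mulVec]
        have hCR : S * A * S * R = S * A := by
          rw [Matrix.mul_assoc (S * A) S R, hSR, Matrix.mul_assoc, hAP]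
        rw [hCR]
        rw [← mulVec_mulVec, hv1, mulVec_smul, mulVec_mulVec, hSB]
      · intro h0
        have hPu : P *ᵥ (R *ᵥ v) = 0 := hBker _ h0
        rw [mulVec_mulVec, hPR] at hPu
        rw [hPu] at hu1
        simp at hu1
    · rintro ⟨u, hu0, hCu, hBu⟩
      set w := P *ᵥ u with hw_def
      have hw0 : w ≠ 0 := by
        intro h
        apply hBu
        calc B *ᵥ u = (B * P) *ᵥ u := by rw [hBP]
          _ = B *ᵥ w := by rw [← mulVec_mulVec]
          _ = 0 := by rw [h, mulVec_zero]
      have hPw : P *ᵥ w = w := by rw [hw_def, mulVec_mulVec, hPP]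
      have hCw : (S * A * S) *ᵥ w = μ • w := by
        have e1 : (S * A * S) *ᵥ w = (S * A * S) *ᵥ u := by
          rw [hw_def, mulVec_mulVec, hCP]
        have e2 : μ • w = (S * A * S) *ᵥ u := by
          rw [hw_def, ← mulVec_smul, ← hCu, mulVec_mulVec, hPC]
        rw [e1, e2]
      have hkey := key w μ hCw hPw
      set t := w ⬝ᵥ w with ht_def
      have ht0 : t ≠ 0 := fun h => hw0 (dotProduct_self_eq_zero.mp h)
      have htnn : 0 ≤ t := Finset.sum_nonneg fun i _ => mul_self_nonneg _
      have hst : Real.sqrt t ≠ 0 :=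
        Real.sqrt_ne_zero'.mpr (lt_of_le_of_ne htnn (Ne.symm ht0))
      refine ⟨(Real.sqrt t)⁻¹ • (S *ᵥ w), ?_, ?_⟩
      · rw [mulVec_smul, hkey, mulVec_smul, smul_comm]
      · have hBSw : B *ᵥ (S *ᵥ w) = R *ᵥ w := by rw [mulVec_mulVec, hBS]
        have hdot2 : (S *ᵥ w) ⬝ᵥ (R *ᵥ w) = t := by
          rw [dot_mulVec_symm S hSsymm, mulVec_mulVec, hSR, hPw, ht_def]
        rw [mulVec_smul, hBSw, smul_dotProduct, dotProduct_smul, hdot2,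
          smul_eq_mul, smul_eq_mul]
        have hts : Real.sqrt t * Real.sqrt t = t := Real.mul_self_sqrt htnn
        field_simp
        rw [sq, hts]
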